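/- Correctness of the p-CC-to-RX3C reduction for MAV: let A have size 3κ and ℋ be 3κ three-element subsets of A with each element in exactly three members. Build candidates C = {p, d₁, d₂, d₃, d₄} ∪ {c(H) : H ∈ ℋ}, votes v(a) = {c(H) : a ∈ H} for each a ∈ A, plus v₁ = {p, d₁, d₂} and v₂ = {p, d₃, d₄}, and set k = κ + 1. If ℋ contains an exact cover of A, then every MAV winning k-committee of (C, V) contains p; if ℋ contains no exact cover of A, then some MAV winning k-committee does not contain p. -/

import Mathlib

namespace Stmt18

variable {α ι : Type*} [DecidableEq α] [DecidableEq ι] [Fintype ι]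

/-- Candidates of the reduction: one candidate `c(H)` per member of `ℋ` (indexed by
`ι`), plus `p = Sum.inr 0` and dummies `d₁, d₂, d₃, d₄ = Sum.inr 1, …, Sum.inr 4`. -/
abbrev Cand (ι : Type*) := ι ⊕ Fin 5

/-- The distinguished candidate `p`. -/
def p : Cand ι := Sum.inr 0

/-- The MAV score of a committee `w`. -/
def mavScore (V : Multiset (Finset (Cand ι))) (w : Finset (Cand ι)) : ℕ :=
  (V.map (fun v => (w \ v).card + (v \ w).card)).sup

/-- `w` is an MAV winning `k`-committee of the election `(C, V)`. -/
def mavWins (C : Finset (Cand ι)) (V : Multiset (Finset (Cand ι))) (k : ℕ)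
    (w : Finset (Cand ι)) : Prop :=
  w ⊆ C ∧ w.card = k ∧ ∀ w' ⊆ C, w'.card = k → mavScore V w ≤ mavScore V w'

/-- The vote `v(a)` for `a ∈ A`: it approves the candidates `c(H)` with `a ∈ H`. -/
def va (Hf : ι → Finset α) (a : α) : Finset (Cand ι) :=
  (Finset.univ.filter (fun i => a ∈ Hf i)).image Sum.inl

/-- The votes of the reduction: one vote `v(a)` per `a ∈ A`, plus `v₁ = {p, d₁, d₂}`
and `v₂ = {p, d₃, d₄}`. -/
def votes (A : Finset α) (Hf : ι → Finset α) : Multiset (Finset (Cand ι)) :=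
  ({Sum.inr 0, Sum.inr 1, Sum.inr 2} : Finset (Cand ι)) ::ₘ
    ({Sum.inr 0, Sum.inr 3, Sum.inr 4} : Finset (Cand ι)) ::ₘ
    A.val.map (va Hf)

/- ----------------- auxiliary lemmas ----------------- -/

lemma card_votes {A : Finset α} {Hf : ι → Finset α}
    (hocc : ∀ a ∈ A, (Finset.univ.filter (fun i => a ∈ Hf i)).card = 3) :
    ∀ v ∈ votes A Hf, v.card = 3 := by
  intro v hv
  simp only [votes, Multiset.mem_cons, Multiset.mem_map, Finset.mem_val] at hv
  rcases hv with rfl | rfl | ⟨a, ha, rfl⟩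
  · simp
  · simp
  · rw [va, Finset.card_image_of_injective _ Sum.inl_injective, hocc a ha]

lemma term_le_of_mem_inter {w v : Finset (Cand ι)} {x : Cand ι}
    (hxw : x ∈ w) (hxv : x ∈ v) :
    (w \ v).card + (v \ w).card ≤ (w.card - 1) + (v.card - 1) := by
  have h1 : w \ v ⊆ w.erase x := by
    intro y hy
    rw [Finset.mem_sdiff] at hy
    exact Finset.mem_erase.mpr ⟨fun h => hy.2 (h ▸ hxv), hy.1⟩
  have h2 : v \ w ⊆ v.erase x := by
    intro y hy
    rw [Finset.mem_sdiff] at hy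
    exact Finset.mem_erase.mpr ⟨fun h => hy.2 (h ▸ hxw), hy.1⟩
  calc (w \ v).card + (v \ w).card
      ≤ (w.erase x).card + (v.erase x).card :=
        Nat.add_le_add (Finset.card_le_card h1) (Finset.card_le_card h2)
    _ = (w.card - 1) + (v.card - 1) := by
        rw [Finset.card_erase_of_mem hxw, Finset.card_erase_of_mem hxv]

lemma score_le_of_inter {κ : ℕ} {A : Finset α} {Hf : ι → Finset α}
    (hocc : ∀ a ∈ A, (Finset.univ.filter (fun i => a ∈ Hf i)).card = 3)
    {w : Finset (Cand ι)} (hw : w.card = κ + 1)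
    (h : ∀ v ∈ votes A Hf, (w ∩ v).Nonempty) :
    mavScore (votes A Hf) w ≤ κ + 2 := by
  rw [mavScore]
  refine Multiset.sup_le.mpr ?_
  intro b hb
  rw [Multiset.mem_map] at hb
  obtain ⟨v, hv, rfl⟩ := hb
  obtain ⟨x, hx⟩ := h v hv
  rw [Finset.mem_inter] at hx
  have := term_le_of_mem_inter hx.1 hx.2
  rw [hw, card_votes hocc v hv] at this
  omega

lemma score_ge_of_disjoint {κ : ℕ} {A : Finset α} {Hf : ι → Finset α}
    (hocc : ∀ a ∈ A, (Finset.univ.filter (fun i => a ∈ Hf i)).card = 3)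
    {w v : Finset (Cand ι)} (hw : w.card = κ + 1)
    (hv : v ∈ votes A Hf) (hd : Disjoint w v) :
    κ + 4 ≤ mavScore (votes A Hf) w := by
  have hterm : (w \ v).card + (v \ w).card = κ + 4 := by
    rw [Finset.sdiff_eq_self_of_disjoint hd, Finset.sdiff_eq_self_of_disjoint hd.symm,
      hw, card_votes hocc v hv]
  rw [mavScore]
  have hm : (w \ v).card + (v \ w).card ∈
      (votes A Hf).map (fun v => (w \ v).card + (v \ w).card) :=
    Multiset.mem_map_of_mem _ hv
  exact hterm ▸ Multiset.le_sup hm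

lemma score_le_always {κ : ℕ} {A : Finset α} {Hf : ι → Finset α}
    (hocc : ∀ a ∈ A, (Finset.univ.filter (fun i => a ∈ Hf i)).card = 3)
    {w : Finset (Cand ι)} (hw : w.card = κ + 1) :
    mavScore (votes A Hf) w ≤ κ + 4 := by
  rw [mavScore]
  refine Multiset.sup_le.mpr ?_
  intro b hb
  rw [Multiset.mem_map] at hb
  obtain ⟨v, hv, rfl⟩ := hb
  have h1 : (w \ v).card ≤ w.card := Finset.card_le_card (Finset.sdiff_subset)
  have h2 : (v \ w).card ≤ v.card := Finset.card_le_card (Finset.sdiff_subset)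
  have h3 := card_votes hocc v hv
  omega

lemma double_count (A : Finset α) (Hf : ι → Finset α)
    (hH3 : ∀ i, (Hf i).card = 3) (hHA : ∀ i, Hf i ⊆ A) (T : Finset ι) :
    ∑ a ∈ A, (T.filter (fun i => a ∈ Hf i)).card = 3 * T.card := by
  simp only [Finset.card_filter]
  rw [Finset.sum_comm]
  have h : ∀ i ∈ T, (∑ a ∈ A, if a ∈ Hf i then 1 else 0) = 3 := by
    intro i _
    rw [← Finset.card_filter, Finset.filter_mem_eq_inter,
      Finset.inter_eq_right.mpr (hHA i), hH3 i]
  rw [Finset.sum_congr rfl h, Finset.sum_const, smul_eq_mul, mul_comm]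

lemma core (κ : ℕ) (A : Finset α) (hA : A.card = 3 * κ) (Hf : ι → Finset α)
    (hH3 : ∀ i, (Hf i).card = 3) (hHA : ∀ i, Hf i ⊆ A)
    (w : Finset (Cand ι)) (hw : w.card = κ + 1)
    (hint : ∀ v ∈ votes A Hf, (w ∩ v).Nonempty) :
    p ∈ w ∧ ∃ T : Finset ι, ∀ a ∈ A, ∃! i, i ∈ T ∧ a ∈ Hf i := by
  set T' : Finset ι := Finset.univ.filter (fun i => Sum.inl i ∈ w) with hT'
  have h1 : ∀ a ∈ A, 1 ≤ (T'.filter (fun i => a ∈ Hf i)).card := by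
    intro a ha
    have hv : va Hf a ∈ votes A Hf := by
      simp only [votes, Multiset.mem_cons, Multiset.mem_map, Finset.mem_val]
      exact Or.inr (Or.inr ⟨a, ha, rfl⟩)
    obtain ⟨x, hx⟩ := hint _ hv
    rw [Finset.mem_inter] at hx
    obtain ⟨i, hi, rfl⟩ := Finset.mem_image.mp hx.2
    rw [Finset.mem_filter] at hi
    refine Finset.card_pos.mpr ⟨i, ?_⟩
    simp only [hT', Finset.mem_filter, Finset.mem_univ, true_and]
    exact ⟨hx.1, hi.2⟩
  have hsum := double_count A Hf hH3 hHA T'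
  have hge : 3 * κ ≤ 3 * T'.card := by
    calc 3 * κ = A.card := hA.symm
      _ = ∑ _a ∈ A, 1 := by simp
      _ ≤ ∑ a ∈ A, (T'.filter (fun i => a ∈ Hf i)).card := Finset.sum_le_sum h1
      _ = 3 * T'.card := hsum
  have himg : (T'.image (Sum.inl : ι → Cand ι)) ⊆ w := by
    intro x hx
    obtain ⟨i, hi, rfl⟩ := Finset.mem_image.mp hx
    exact (Finset.mem_filter.mp hi).2
  have hcardimg : ((T'.image (Sum.inl : ι → Cand ι))).card = T'.card :=
    Finset.card_image_of_injective T' Sum.inl_injective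
  have hp : p ∈ w := by
    by_contra hp
    have hv1 : ({Sum.inr 0, Sum.inr 1, Sum.inr 2} : Finset (Cand ι)) ∈ votes A Hf :=
      Multiset.mem_cons_self _ _
    have hv2 : ({Sum.inr 0, Sum.inr 3, Sum.inr 4} : Finset (Cand ι)) ∈ votes A Hf :=
      Multiset.mem_cons_of_mem (Multiset.mem_cons_self _ _)
    obtain ⟨x, hx⟩ := hint _ hv1
    obtain ⟨y, hy⟩ := hint _ hv2
    rw [Finset.mem_inter] at hx hy
    have hxw := hx.1
    have hyw := hy.1
    have hx2 := hx.2
    have hy2 := hy.2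
    simp only [Finset.mem_insert, Finset.mem_singleton] at hx2 hy2
    have hxne : x ≠ Sum.inr 0 := fun h => hp (by rw [p]; exact h ▸ hxw)
    have hyne : y ≠ Sum.inr 0 := fun h => hp (by rw [p]; exact h ▸ hyw)
    have hxcase : x = Sum.inr 1 ∨ x = Sum.inr 2 := by tauto
    have hycase : y = Sum.inr 3 ∨ y = Sum.inr 4 := by tauto
    have hxy : x ≠ y := by
      rcases hxcase with rfl | rfl <;> rcases hycase with rfl | rfl <;> simp
    have hxnotin : x ∉ (T'.image (Sum.inl : ι → Cand ι)) := by
      intro hmem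
      obtain ⟨i, _, hixe⟩ := Finset.mem_image.mp hmem
      rcases hxcase with rfl | rfl <;> exact nomatch hixe
    have hynotin : y ∉ (T'.image (Sum.inl : ι → Cand ι)) := by
      intro hmem
      obtain ⟨i, _, hixe⟩ := Finset.mem_image.mp hmem
      rcases hycase with rfl | rfl <;> exact nomatch hixe
    have hsub : insert x (insert y ((T'.image (Sum.inl : ι → Cand ι)))) ⊆ w := by
      intro z hz
      rcases Finset.mem_insert.mp hz with rfl | hz
      · exact hxw
      rcases Finset.mem_insert.mp hz with rfl | hz
      · exact hyw
      · exact himg hz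
    have hcard : (insert x (insert y ((T'.image (Sum.inl : ι → Cand ι))))).card = T'.card + 2 := by
      rw [Finset.card_insert_of_notMem (by
          simp only [Finset.mem_insert]
          push_neg
          exact ⟨hxy, hxnotin⟩),
        Finset.card_insert_of_notMem hynotin, hcardimg]
    have := Finset.card_le_card hsub
    rw [hcard, hw] at this
    omega
  refine ⟨hp, T', ?_⟩
  -- p ∈ w, bound T'.card ≤ κ
  have hpn : p ∉ (T'.image (Sum.inl : ι → Cand ι)) := by
    intro hmem
    obtain ⟨i, _, hixe⟩ := Finset.mem_image.mp hmem
    rw [p] at hixe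
    exact nomatch hixe
  have hsub : insert p ((T'.image (Sum.inl : ι → Cand ι))) ⊆ w := by
    intro z hz
    rcases Finset.mem_insert.mp hz with rfl | hz
    · exact hp
    · exact himg hz
  have hcard : (insert p ((T'.image (Sum.inl : ι → Cand ι)))).card = T'.card + 1 := by
    rw [Finset.card_insert_of_notMem hpn, hcardimg]
  have hle := Finset.card_le_card hsub
  rw [hcard, hw] at hle
  have hTκ : T'.card = κ := by omega
  have hsum' : (∑ _a ∈ A, 1) = ∑ a ∈ A, (T'.filter (fun i => a ∈ Hf i)).card := by
    rw [hsum, hTκ]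
    simp [hA]
  have hone := (Finset.sum_eq_sum_iff_of_le h1).mp hsum'
  intro a ha
  obtain ⟨i₀, hi₀⟩ := Finset.card_eq_one.mp (hone a ha).symm
  have hmem : ∀ i, i ∈ T' ∧ a ∈ Hf i ↔ i = i₀ := by
    intro i
    constructor
    · intro h
      have hm : i ∈ T'.filter (fun i => a ∈ Hf i) := Finset.mem_filter.mpr h
      rwa [hi₀, Finset.mem_singleton] at hm
    · rintro rfl
      have hm : i ∈ ({i} : Finset ι) := Finset.mem_singleton_self _
      rw [← hi₀] at hm
      exact Finset.mem_filter.mp hm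
  exact ⟨i₀, (hmem i₀).mpr rfl, fun i hi => (hmem i).mp hi⟩

lemma cover_card (κ : ℕ) (A : Finset α) (hA : A.card = 3 * κ) (Hf : ι → Finset α)
    (hH3 : ∀ i, (Hf i).card = 3) (hHA : ∀ i, Hf i ⊆ A) (T : Finset ι)
    (hT : ∀ a ∈ A, ∃! i, i ∈ T ∧ a ∈ Hf i) : T.card = κ := by
  have h1 : ∀ a ∈ A, (T.filter (fun i => a ∈ Hf i)).card = 1 := by
    intro a ha
    obtain ⟨i₀, hi₀, hu⟩ := hT a ha
    rw [Finset.card_eq_one]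
    refine ⟨i₀, ?_⟩
    ext i
    simp only [Finset.mem_filter, Finset.mem_singleton]
    exact ⟨fun h => hu i h, fun h => h ▸ ⟨hi₀.1, hi₀.2⟩⟩
  have hd := double_count A Hf hH3 hHA T
  rw [Finset.sum_congr rfl h1] at hd
  simp only [Finset.sum_const, smul_eq_mul, mul_one, hA] at hd
  omega

/- ----------------- main theorem ----------------- -/

/-- Correctness of the p-CC-to-RX3C reduction for MAV with `k = κ + 1`: if `ℋ`
contains an exact cover of `A` then every MAV winning `(κ+1)`-committee contains
`p`; if `ℋ` contains no exact cover of `A` then some MAV winning `(κ+1)`-committee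
does not contain `p`. -/
theorem pcc_mav_rx3c_correct
    (κ : ℕ) (hκ : 1 ≤ κ) (A : Finset α) (hA : A.card = 3 * κ)
    (Hf : ι → Finset α) (hι : Fintype.card ι = 3 * κ)
    (hH3 : ∀ i, (Hf i).card = 3) (hHA : ∀ i, Hf i ⊆ A)
    (hocc : ∀ a ∈ A, (Finset.univ.filter (fun i => a ∈ Hf i)).card = 3)
    (C : Finset (Cand ι)) (hC : C = Finset.univ) :
    ((∃ T : Finset ι, ∀ a ∈ A, ∃! i, i ∈ T ∧ a ∈ Hf i) →
      ∀ w, mavWins C (votes A Hf) (κ + 1) w → p ∈ w) ∧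
    ((¬ ∃ T : Finset ι, ∀ a ∈ A, ∃! i, i ∈ T ∧ a ∈ Hf i) →
      ∃ w, mavWins C (votes A Hf) (κ + 1) w ∧ p ∉ w) := by
  constructor
  · rintro ⟨T, hT⟩ w ⟨hwC, hwcard, hmin⟩
    have hTcard := cover_card κ A hA Hf hH3 hHA T hT
    -- build the witness committee w₀
    set w₀ : Finset (Cand ι) := insert p (T.image Sum.inl) with hw₀
    have hpn : p ∉ T.image Sum.inl := by
      intro hmem
      obtain ⟨i, _, hixe⟩ := Finset.mem_image.mp hmem
      rw [p] at hixe
      exact nomatch hixe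
    have hw₀card : w₀.card = κ + 1 := by
      rw [hw₀, Finset.card_insert_of_notMem hpn,
        Finset.card_image_of_injective _ Sum.inl_injective, hTcard]
    have hw₀int : ∀ v ∈ votes A Hf, (w₀ ∩ v).Nonempty := by
      intro v hv
      simp only [votes, Multiset.mem_cons, Multiset.mem_map, Finset.mem_val] at hv
      rcases hv with rfl | rfl | ⟨a, ha, rfl⟩
      · exact ⟨p, Finset.mem_inter.mpr ⟨Finset.mem_insert_self _ _, by simp [p]⟩⟩
      · exact ⟨p, Finset.mem_inter.mpr ⟨Finset.mem_insert_self _ _, by simp [p]⟩⟩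
      · obtain ⟨i₀, hi₀, _⟩ := hT a ha
        refine ⟨Sum.inl i₀, Finset.mem_inter.mpr ⟨?_, ?_⟩⟩
        · exact Finset.mem_insert_of_mem (Finset.mem_image_of_mem _ hi₀.1)
        · rw [va]
          exact Finset.mem_image_of_mem _ (Finset.mem_filter.mpr ⟨Finset.mem_univ _, hi₀.2⟩)
    have hscore₀ : mavScore (votes A Hf) w₀ ≤ κ + 2 :=
      score_le_of_inter hocc hw₀card hw₀int
    have hscore : mavScore (votes A Hf) w ≤ κ + 2 :=
      le_trans (hmin w₀ (hC ▸ Finset.subset_univ _) hw₀card) hscore₀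
    have hint : ∀ v ∈ votes A Hf, (w ∩ v).Nonempty := by
      intro v hv
      by_contra h
      rw [Finset.not_nonempty_iff_eq_empty] at h
      have hd : Disjoint w v := Finset.disjoint_iff_inter_eq_empty.mpr h
      have := score_ge_of_disjoint hocc hwcard hv hd
      omega
    exact (core κ A hA Hf hH3 hHA w hwcard hint).1
  · intro hnc
    have hcardU : (Finset.univ.erase (p : Cand ι)).card = 3 * κ + 4 := by
      rw [Finset.card_erase_of_mem (Finset.mem_univ _), Finset.card_univ]
      simp [Fintype.card_sum, hι]
    obtain ⟨w, hwsub, hwcard⟩ :=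
      Finset.exists_subset_card_eq (show κ + 1 ≤ (Finset.univ.erase (p : Cand ι)).card by
        rw [hcardU]; omega)
    refine ⟨w, ⟨hC ▸ fun x hx => Finset.mem_univ x, hwcard, ?_⟩, fun hpw =>
      (Finset.mem_erase.mp (hwsub hpw)).1 rfl⟩
    intro w' hw'C hw'card
    have h4 : mavScore (votes A Hf) w ≤ κ + 4 := score_le_always hocc hwcard
    by_contra hlt
    push_neg at hlt
    have hint : ∀ v ∈ votes A Hf, (w' ∩ v).Nonempty := by
      intro v hv
      by_contra h
      rw [Finset.not_nonempty_iff_eq_empty] at h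
      have hd : Disjoint w' v := Finset.disjoint_iff_inter_eq_empty.mpr h
      have := score_ge_of_disjoint hocc hw'card hv hd
      omega
    exact hnc (core κ A hA Hf hH3 hHA w' hw'card hint).2

end Stmt18
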